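/- arXiv:1711.02314 — 5 statements merged into one kernel-verified Lean document; each statement's English description precedes it below -/
import Mathlib

section
/- Let N ≥ 1 and let h be an N×N complex matrix that is tridiagonal with zero diagonal, i.e. h_{nm} = 0 whenever |n−m| ≠ 1. Let D be the N×N diagonal matrix with diagonal entries D_{nn} = (−1)^n, and let Y = [[0,−i],[i,0]] and Z = [[1,0],[0,−1]] be the 2×2 Pauli matrices. Then for every real t, the matrix Z ⊗ D (Kronecker product) commutes with exp(−2it (Y ⊗ h)). -/
open Matrix Kronecker Complex

lemma neg_kron_neg {n m p q : ℕ} (A : Matrix (Fin n) (Fin m) ℂ) (B : Matrix (Fin p) (Fin q) ℂ) :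
    (-A) ⊗ₖ (-B) = A ⊗ₖ B := by
  ext i j
  simp [Matrix.kroneckerMap_apply]

lemma pauli_anticomm : (!![1, 0; 0, -1] : Matrix (Fin 2) (Fin 2) ℂ) * !![0, -Complex.I; Complex.I, 0]
    = -(!![0, -Complex.I; Complex.I, 0] * !![1, 0; 0, -1]) := by
  ext i j
  fin_cases i <;> fin_cases j <;> simp [Matrix.mul_apply, Fin.sum_univ_two]

/-- For a tridiagonal `N × N` complex matrix `h` with zero diagonal
(`h n m = 0` whenever `|n - m| ≠ 1`), the matrix `Z ⊗ D` (with `D` the alternating-sign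
diagonal matrix `D_{nn} = (-1)^n`, indices `1,…,N`, and `Z` the Pauli-Z matrix) commutes
with `exp (-2 i t (Y ⊗ h))` for every real `t`, where `Y` is the Pauli-Y matrix. -/
theorem stmt0 (N : ℕ) (hN : 1 ≤ N) (h : Matrix (Fin N) (Fin N) ℂ)
    (htri : ∀ n m : Fin N, ((n : ℤ) - (m : ℤ)).natAbs ≠ 1 → h n m = 0)
    (D : Matrix (Fin N) (Fin N) ℂ)
    (hD : D = Matrix.diagonal fun n : Fin N => (-1 : ℂ) ^ ((n : ℕ) + 1))
    (Y Z : Matrix (Fin 2) (Fin 2) ℂ)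
    (hY : Y = !![0, -Complex.I; Complex.I, 0])
    (hZ : Z = !![1, 0; 0, -1])
    (t : ℝ) :
    Commute (Z ⊗ₖ D)
      (NormedSpace.exp ((-2 * Complex.I * (t : ℂ)) • (Y ⊗ₖ h))) := by
  have hDh : D * h = -(h * D) := by
    ext n m
    by_cases hnm : ((n : ℤ) - (m : ℤ)).natAbs = 1
    · have hsign : ((-1 : ℂ) ^ ((n : ℕ) + 1)) = -((-1 : ℂ) ^ ((m : ℕ) + 1)) := by
        have : (n : ℕ) = m + 1 ∨ (m : ℕ) = n + 1 := by omega
        rcases this with h1 | h1 <;> rw [h1] <;> ring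
      simp [hD, Matrix.diagonal_mul, Matrix.mul_diagonal, hsign]
      ring
    · simp [hD, Matrix.diagonal_mul, Matrix.mul_diagonal, htri n m hnm]
  have hcomm : Commute (Z ⊗ₖ D) (Y ⊗ₖ h) := by
    unfold Commute SemiconjBy
    rw [← Matrix.mul_kronecker_mul, ← Matrix.mul_kronecker_mul, hY, hZ, pauli_anticomm, hDh, neg_kron_neg]
  exact (hcomm.smul_right _).exp_right
end

section
/- Let N = 2L be even and let h be an N×N complex Hermitian matrix satisfying D·h·D = −h and P·h·P = h, where D is the diagonal matrix with D_{nn} = (−1)^n and P is the reversal (exchange) matrix with P_{nm} = 1 if m = N+1−n and 0 otherwise. Suppose perfect state transfer holds: exp(−i t₀ h) = c·P for some real t₀ and some c ∈ ℂ with |c| = 1. Let D̃ be the diagonal matrix whose first L diagonal entries are −1 and whose last L diagonal entries are +1, and set R = exp(i(t₀/2)h) · D̃ · exp(−i(t₀/2)h). Then every diagonal entry of R vanishes: R_{nn} = 0 for all n = 1,…,N. -/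
open Matrix

/-- paper's Lemma 2, `0diagonal`. For an even-length chain (`N = 2L`)
with Hermitian single-excitation Hamiltonian `h` satisfying `D·h·D = -h` (symmetric
spectrum), `P·h·P = h` (mirror symmetry) and perfect state transfer
`exp(-i t₀ h) = c·P` with `|c| = 1`, the matrix
`R = exp(i (t₀/2) h) · D̃ · exp(-i (t₀/2) h)` has vanishing diagonal, where `D̃` is the
diagonal matrix whose first `L` entries are `-1` and last `L` entries are `+1`. -/
theorem stmt2 (L : ℕ) (hL : 1 ≤ L) (N : ℕ) (hNL : N = 2 * L)
    (h : Matrix (Fin N) (Fin N) ℂ) (hherm : h.IsHermitian)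
    (D P : Matrix (Fin N) (Fin N) ℂ)
    (hD : D = Matrix.diagonal fun n : Fin N => (-1 : ℂ) ^ ((n : ℕ) + 1))
    (hP : P = Matrix.of fun n m : Fin N => if (n : ℕ) + (m : ℕ) + 1 = N then (1 : ℂ) else 0)
    (hanti : D * h * D = -h) (hmirror : P * h * P = h)
    (t₀ : ℝ) (c : ℂ) (hc : ‖c‖ = 1)
    (hpst : NormedSpace.exp ((-Complex.I * (t₀ : ℂ)) • h) = c • P)
    (Dt : Matrix (Fin N) (Fin N) ℂ)
    (hDt : Dt = Matrix.diagonal fun n : Fin N => if (n : ℕ) < L then (-1 : ℂ) else 1)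
    (R : Matrix (Fin N) (Fin N) ℂ)
    (hR : R = NormedSpace.exp ((Complex.I * ((t₀ : ℂ) / 2)) • h) * Dt *
      NormedSpace.exp ((-Complex.I * ((t₀ : ℂ) / 2)) • h)) :
    ∀ n : Fin N, R n n = 0 := by
  -- abbreviations
  set θ : ℂ := (t₀ : ℂ) / 2 with hθ
  set A : Matrix (Fin N) (Fin N) ℂ := NormedSpace.exp ((-Complex.I * θ) • h) with hA
  set B : Matrix (Fin N) (Fin N) ℂ := NormedSpace.exp ((Complex.I * θ) • h) with hB
  -- basic facts about D
  have hDD : D * D = 1 := by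
    rw [hD, Matrix.diagonal_mul_diagonal, ← Matrix.diagonal_one]
    refine congrArg Matrix.diagonal (funext fun n => ?_)
    rw [← pow_add]
    exact Even.neg_one_pow ⟨(n : ℕ) + 1, rfl⟩
  have hDDtD : D * Dt * D = Dt := by
    rw [hD, hDt, Matrix.diagonal_mul_diagonal, Matrix.diagonal_mul_diagonal]
    refine congrArg Matrix.diagonal (funext fun n => ?_)
    rw [mul_right_comm, ← pow_add, Even.neg_one_pow ⟨(n : ℕ) + 1, rfl⟩, one_mul]
  -- multiplication by P is reversal
  have hPM : ∀ M : Matrix (Fin N) (Fin N) ℂ,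
      P * M = Matrix.of fun i j => M i.rev j := by
    intro M; ext i j
    rw [hP, Matrix.mul_apply]
    rw [Finset.sum_eq_single i.rev]
    · have hi := i.isLt
      simp only [Matrix.of_apply]
      rw [if_pos (by rw [Fin.val_rev]; omega), one_mul]
    · intro k _ hk
      simp only [Matrix.of_apply]
      rw [if_neg, zero_mul]
      intro hcon
      exact hk (Fin.ext (by rw [Fin.val_rev]; omega))
    · intro hmem; exact absurd (Finset.mem_univ _) hmem
  have hMP : ∀ M : Matrix (Fin N) (Fin N) ℂ,
      M * P = Matrix.of fun i j => M i j.rev := by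
    intro M; ext i j
    rw [hP, Matrix.mul_apply]
    rw [Finset.sum_eq_single j.rev]
    · have hj := j.isLt
      simp only [Matrix.of_apply]
      rw [if_pos (by rw [Fin.val_rev]; omega), mul_one]
    · intro k _ hk
      simp only [Matrix.of_apply]
      rw [if_neg, mul_zero]
      intro hcon
      exact hk (Fin.ext (by rw [Fin.val_rev]; omega))
    · intro hmem; exact absurd (Finset.mem_univ _) hmem
  have hPP : P * P = 1 := by
    rw [hPM P]
    ext i j
    have hi := i.isLt; have hj := j.isLt
    rw [Matrix.of_apply, hP, Matrix.of_apply, Matrix.one_apply, Fin.val_rev]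
    by_cases hij : i = j
    · subst hij; rw [if_pos (by omega), if_pos rfl]
    · rw [if_neg, if_neg hij]
      intro hcon
      exact hij (Fin.ext (by omega))
  have hPDtP : P * Dt * P = -Dt := by
    rw [hMP, hPM]
    ext i j
    have hi := i.isLt; have hj := j.isLt
    simp only [Matrix.of_apply, Matrix.neg_apply, hDt]
    by_cases hij : i = j
    · subst hij
      rw [Matrix.diagonal_apply_eq, Matrix.diagonal_apply_eq, Fin.val_rev]
      by_cases hiL : (i : ℕ) < L
      · rw [if_neg (by omega), if_pos hiL]; norm_num
      · rw [if_pos (by omega), if_neg hiL]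
    · rw [Matrix.diagonal_apply_ne _ (fun hcon => hij (Fin.rev_inj.mp hcon)),
        Matrix.diagonal_apply_ne _ hij, neg_zero]
  -- conjugation of exponentials
  have hDinv : D⁻¹ = D := Matrix.inv_eq_right_inv hDD
  have hDu : IsUnit D := ⟨⟨D, D, hDD, hDD⟩, rfl⟩
  have hPinv : P⁻¹ = P := Matrix.inv_eq_right_inv hPP
  have hPu : IsUnit P := ⟨⟨P, P, hPP, hPP⟩, rfl⟩
  have conjD : ∀ a : ℂ, D * NormedSpace.exp (a • h) * D
      = NormedSpace.exp ((-a) • h) := by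
    intro a
    have hconj := Matrix.exp_conj D (a • h) hDu
    rw [hDinv] at hconj
    rw [← hconj]
    congr 1
    rw [mul_smul_comm, smul_mul_assoc, hanti, smul_neg, neg_smul]
  have conjP : ∀ a : ℂ, P * NormedSpace.exp (a • h) * P
      = NormedSpace.exp (a • h) := by
    intro a
    have hconj := Matrix.exp_conj P (a • h) hPu
    rw [hPinv] at hconj
    rw [← hconj]
    congr 1
    rw [mul_smul_comm, smul_mul_assoc, hmirror]
  -- products of the exponentials
  have hcomm : ∀ a b : ℂ, Commute (a • h) (b • h) :=
    fun a b => ((Commute.refl h).smul_left a).smul_right b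
  have hadd : ∀ a b : ℂ, NormedSpace.exp (a • h) * NormedSpace.exp (b • h)
      = NormedSpace.exp ((a + b) • h) := by
    intro a b
    rw [add_smul, Matrix.exp_add_of_commute _ _ (hcomm a b)]
  have hAB : A * B = 1 := by
    rw [hA, hB, hadd]
    have : -Complex.I * θ + Complex.I * θ = 0 := by ring
    rw [this, zero_smul, NormedSpace.exp_zero]
  have hBA : B * A = 1 := by
    rw [hA, hB, hadd]
    have : Complex.I * θ + -Complex.I * θ = 0 := by ring
    rw [this, zero_smul, NormedSpace.exp_zero]
  have hAA : A * A = c • P := by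
    rw [hA, hadd]
    have : -Complex.I * θ + -Complex.I * θ = -Complex.I * (t₀ : ℂ) := by
      rw [hθ]; ring
    rw [this, hpst]
  have hc0 : c ≠ 0 := fun hcc => by simp [hcc] at hc
  have hcP : (c • P) * (c⁻¹ • P) = 1 := by
    rw [smul_mul_assoc, mul_smul_comm, smul_smul, mul_inv_cancel₀ hc0, one_smul, hPP]
  have hBB : B * B = c⁻¹ • P := by
    have h1 : B * B * (A * A) = 1 := by
      have : B * B * (A * A) = B * (B * A) * A := by noncomm_ring
      rw [this, hBA, Matrix.mul_one, hBA]
    calc B * B = B * B * ((c • P) * (c⁻¹ • P)) := by rw [hcP, Matrix.mul_one]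
      _ = B * B * (A * A) * (c⁻¹ • P) := by rw [hAA, ← Matrix.mul_assoc]
      _ = c⁻¹ • P := by rw [h1, Matrix.one_mul]
  -- the sandwich lemma
  have key : ∀ Q M₁ M₂ M₃ : Matrix (Fin N) (Fin N) ℂ, Q * Q = 1 →
      (Q * M₁ * Q) * (Q * M₂ * Q) * (Q * M₃ * Q) = Q * (M₁ * M₂ * M₃) * Q := by
    intro Q M₁ M₂ M₃ hQ
    have h1 : (Q * M₁ * Q) * (Q * M₂ * Q) * (Q * M₃ * Q)
        = Q * M₁ * (Q * Q) * M₂ * ((Q * Q) * M₃ * Q) := by noncomm_ring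
    rw [h1, hQ, Matrix.mul_one, Matrix.one_mul]
    noncomm_ring
  -- D R D = P R P
  have hDRD : D * R * D = P * R * P := by
    have e1 : D * R * D = A * Dt * B := by
      rw [hR, ← key D B Dt A hDD]
      rw [show D * B * D = A by
        rw [hB, conjD, hA]; congr 2; ring]
      rw [show D * A * D = B by
        rw [hA, conjD, hB]; congr 2; ring]
      rw [hDDtD]
    have e2 : A * Dt * B = (A * A) * (B * Dt * A) * (B * B) := by
      have : (A * A) * (B * Dt * A) * (B * B)
          = A * (A * B) * Dt * ((A * B) * B) := by noncomm_ring
      rw [this, hAB, Matrix.mul_one, Matrix.one_mul]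
    rw [e1, e2, hAA, hBB, ← hR]
    rw [smul_mul_assoc, smul_mul_assoc, mul_smul_comm, smul_smul,
      mul_inv_cancel₀ hc0, one_smul]
  -- P R P = -R
  have hPRP : P * R * P = -R := by
    rw [hR, ← key P B Dt A hPP]
    rw [show P * B * P = B from by rw [hB, conjP]]
    rw [show P * A * P = A from by rw [hA, conjP]]
    rw [hPDtP]
    noncomm_ring
  have hfinal : D * R * D = -R := by rw [hDRD, hPRP]
  -- read off the diagonal
  intro n
  have hentry : ((-1 : ℂ) ^ ((n : ℕ) + 1)) * R n n * ((-1 : ℂ) ^ ((n : ℕ) + 1))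
      = -R n n := by
    have := congrFun (congrFun hfinal n) n
    rwa [hD, Matrix.mul_diagonal, Matrix.diagonal_mul, Matrix.neg_apply] at this
  rw [mul_right_comm, ← pow_add, Even.neg_one_pow ⟨(n : ℕ) + 1, rfl⟩, one_mul] at hentry
  linear_combination hentry / 2
end

section
/- Let N = 2L be even and let h be an N×N complex Hermitian matrix satisfying D·h·D = −h and P·h·P = h, where D is the diagonal matrix with D_{nn} = (−1)^n and P is the reversal (exchange) matrix with P_{nm} = 1 if m = N+1−n and 0 otherwise. Suppose exp(−i t₀ h) = c·P for some real t₀ and some c ∈ ℂ with |c| = 1. Then the entries of U = exp(−i(t₀/2)h) have mirror-symmetric moduli within each column: |U_{m,n}| = |U_{N+1−m,n}| for all m, n. -/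
open Matrix

/-- key intermediate claim in the proof of the paper's Lemma 2.
For an even-length chain (`N = 2L`) with Hermitian single-excitation Hamiltonian `h`
satisfying `D·h·D = -h`, `P·h·P = h` and perfect state transfer `exp(-i t₀ h) = c·P`
with `|c| = 1`, the entries of `U = exp(-i (t₀/2) h)` have mirror-symmetric moduli within
each column: `|U_{m,n}| = |U_{N+1-m,n}|` for all `m, n`. -/
theorem stmt3 (L : ℕ) (hL : 1 ≤ L) (N : ℕ) (hNL : N = 2 * L)
    (h : Matrix (Fin N) (Fin N) ℂ) (hherm : h.IsHermitian)
    (D P : Matrix (Fin N) (Fin N) ℂ)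
    (hD : D = Matrix.diagonal fun n : Fin N => (-1 : ℂ) ^ ((n : ℕ) + 1))
    (hP : P = Matrix.of fun n m : Fin N => if (n : ℕ) + (m : ℕ) + 1 = N then (1 : ℂ) else 0)
    (hanti : D * h * D = -h) (hmirror : P * h * P = h)
    (t₀ : ℝ) (c : ℂ) (hc : ‖c‖ = 1)
    (hpst : NormedSpace.exp ((-Complex.I * (t₀ : ℂ)) • h) = c • P)
    (U : Matrix (Fin N) (Fin N) ℂ)
    (hU : U = NormedSpace.exp ((-Complex.I * ((t₀ : ℂ) / 2)) • h)) :
    ∀ m n : Fin N, ‖U m n‖ = ‖U m.rev n‖ := by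
  -- basic facts about P
  have hNpos : 0 < N := by omega
  have hPmul : ∀ M : Matrix (Fin N) (Fin N) ℂ, ∀ m n : Fin N,
      (P * M) m n = M m.rev n := by
    intro M m n
    have key : ∀ k : Fin N, ((m : ℕ) + (k : ℕ) + 1 = N) ↔ k = m.rev := by
      intro k
      rw [Fin.ext_iff, Fin.val_rev]
      have := m.isLt; have := k.isLt
      omega
    simp only [Matrix.mul_apply, hP, Matrix.of_apply]
    rw [Finset.sum_congr rfl (fun k _ => by rw [if_congr (key k) rfl rfl])]
    simp
  have hPP : P * P = 1 := by
    ext m n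
    rw [hPmul P m n]
    have := m.isLt; have := n.isLt
    by_cases hmn : m = n
    · subst hmn
      simp only [hP, Matrix.of_apply, Matrix.one_apply_eq, Fin.val_rev]
      rw [if_pos (by omega)]
    · simp only [hP, Matrix.of_apply, Matrix.one_apply_ne' (Ne.symm hmn), Fin.val_rev]
      rw [if_neg (by rw [Fin.ext_iff] at hmn; omega)]
  have hDD : D * D = 1 := by
    have hsq : ∀ x : Fin N, (-1 : ℂ) ^ ((x : ℕ) + 1) * (-1 : ℂ) ^ ((x : ℕ) + 1) = 1 := by
      intro x
      rw [← pow_add]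
      exact Even.neg_one_pow ⟨(x : ℕ) + 1, rfl⟩
    rw [hD, Matrix.diagonal_mul_diagonal]
    simp only [hsq, Matrix.diagonal_one]
  -- commutation of P with h
  have hPh : P * h = h * P := by
    calc P * h = (P * h * P) * P := by rw [mul_assoc, hPP, mul_one]
    _ = h * P := by rw [hmirror]
  set s : ℂ := -Complex.I * ((t₀ : ℂ) / 2) with hs
  -- U * U = c • P
  have hUU : U * U = c • P := by
    have e1 : NormedSpace.exp ((s • h) + (s • h)) =
        NormedSpace.exp (s • h) * NormedSpace.exp (s • h) :=
      Matrix.exp_add_of_commute _ _ (((Commute.refl h).smul_left s).smul_right s)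
    rw [hU, ← e1, ← hpst]
    congr 1
    rw [← add_smul]
    congr 1
    ring
  -- conjugation by D
  have hDunit : IsUnit D := ⟨⟨D, D, hDD, hDD⟩, rfl⟩
  have hDinv : D⁻¹ = D := Matrix.inv_eq_right_inv hDD
  have hDUD : D * U * D = NormedSpace.exp ((-s) • h) := by
    have hconj : D * (s • h) * D = (-s) • h := by
      have : D * (s • h) * D = s • (D * h * D) := by
        rw [Matrix.mul_smul, Matrix.smul_mul]
      rw [this, hanti, smul_neg, neg_smul]
    have := Matrix.exp_conj D (s • h) hDunit
    rw [hDinv, hconj] at this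
    rw [hU, ← this]
  -- D U D is a left inverse of U
  have hinv : (D * U * D) * U = 1 := by
    have e2 : NormedSpace.exp (((-s) • h) + (s • h)) =
        NormedSpace.exp ((-s) • h) * NormedSpace.exp (s • h) :=
      Matrix.exp_add_of_commute _ _ (((Commute.refl h).smul_left (-s)).smul_right s)
    rw [hDUD, hU, ← e2, neg_smul, neg_add_cancel, NormedSpace.exp_zero]
  -- P commutes with U
  have hPU : P * U = U * P := by
    have hPs : P * (s • h) = (s • h) * P := by
      rw [Matrix.mul_smul, Matrix.smul_mul, hPh]
    have hPunit : IsUnit P := ⟨⟨P, P, hPP, hPP⟩, rfl⟩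
    have hPinv : P⁻¹ = P := Matrix.inv_eq_right_inv hPP
    have hPsP : P * (s • h) * P = s • h := by
      rw [hPs, mul_assoc, hPP, mul_one]
    have hconj : P * U * P = U := by
      have := Matrix.exp_conj P (s • h) hPunit
      rw [hPinv, hPsP] at this
      rw [hU]
      conv_rhs => rw [this]
    calc P * U = (P * U * P) * P := by rw [mul_assoc, hPP, mul_one]
      _ = U * P := by rw [hconj]
  -- the key equation
  have hccbar : (starRingEnd ℂ) c * c = 1 := by
    rw [mul_comm, Complex.mul_conj]
    norm_cast
    rw [← Complex.sq_norm, hc, one_pow]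
  have hright : U * ((starRingEnd ℂ) c • (P * U)) = 1 := by
    rw [Matrix.mul_smul, ← mul_assoc, ← hPU, mul_assoc, hUU, Matrix.mul_smul, smul_smul,
      hPP, hccbar, one_smul]
  have hkey : D * U * D = (starRingEnd ℂ) c • (P * U) := by
    calc D * U * D = (D * U * D) * (U * ((starRingEnd ℂ) c • (P * U))) := by
          rw [hright, mul_one]
      _ = ((D * U * D) * U) * ((starRingEnd ℂ) c • (P * U)) := by
          simp only [← mul_assoc]
      _ = (starRingEnd ℂ) c • (P * U) := by rw [hinv, one_mul]
  -- extract entries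
  intro m n
  have := congrFun (congrFun hkey m) n
  have hL : (D * U * D) m n = (-1 : ℂ) ^ ((m : ℕ) + 1) * U m n * (-1 : ℂ) ^ ((n : ℕ) + 1) := by
    rw [hD, Matrix.mul_diagonal, Matrix.diagonal_mul]
  have hR : ((starRingEnd ℂ) c • (P * U)) m n = (starRingEnd ℂ) c * U m.rev n := by
    rw [Matrix.smul_apply, hPmul U m n, smul_eq_mul]
  rw [hL, hR] at this
  have := congrArg (‖·‖) this
  simpa [norm_mul, norm_pow, Complex.norm_conj, hc] using this
end

section
/- Let N ≥ 2 be even and let h₁ be the N×N real symmetric tridiagonal 'standard perfect state transfer' matrix with zero diagonal and off-diagonal entries (h₁)_{n,n+1} = (h₁)_{n+1,n} = √(n(N−n)) for n = 1,…,N−1. Let D̃ be the diagonal matrix whose first N/2 diagonal entries are −1 and whose last N/2 diagonal entries are +1, and set R = exp(i(π/4)h₁) · D̃ · exp(−i(π/4)h₁). Then R_{n,m} = 0 whenever n and m have the same parity (n ≡ m mod 2). -/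
/-- The entry function of the ladder matrix `W = Jz - (J₊ - J₋)/2` (suitably scaled). -/
noncomputable def Stmt5Aux.w (N : ℕ) (γ : ℕ → ℂ) (x y : ℕ) : ℂ :=
  if x + 1 = y then γ x else if y + 1 = x then -γ y
    else if x = y then 2 * (x : ℂ) - ((N : ℂ) - 1) else 0

namespace Stmt5Aux

variable {N : ℕ} {γ : ℕ → ℂ}

theorem w_succ {x y : ℕ} (h : x + 1 = y) : w N γ x y = γ x := by
  rw [w, if_pos h]

theorem w_pred {x y : ℕ} (h : y + 1 = x) : w N γ x y = -γ y := by
  rw [w, if_neg (by omega), if_pos h]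

theorem w_diag {x y : ℕ} (h : x = y) : w N γ x y = 2 * (x : ℂ) - ((N : ℂ) - 1) := by
  rw [w, if_neg (by omega), if_neg (by omega), if_pos h]

theorem w_far {x y : ℕ} (h1 : x + 1 ≠ y) (h2 : y + 1 ≠ x) (h3 : x ≠ y) : w N γ x y = 0 := by
  rw [w, if_neg h1, if_neg h2, if_neg h3]

/-- Entrywise form of `[h₁, W] = 2W`. -/
theorem KE (N : ℕ) (γ : ℕ → ℂ)
    (hsq : ∀ n, n + 1 ≤ N → γ n * γ n = ((n : ℂ) + 1) * ((N : ℂ) - ((n : ℂ) + 1)))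
    (hz : ∀ n, N ≤ n + 1 → γ n = 0)
    (a b : ℕ) (ha : a < N) (hb : b < N) :
    (if h : a + 1 < N then γ a * w N γ (a + 1) b else 0)
      + (if h : 1 ≤ a ∧ a - 1 < N then γ (a - 1) * w N γ (a - 1) b else 0)
    = (if h : 1 ≤ b ∧ b - 1 < N then w N γ a (b - 1) * γ (b - 1) else 0)
      + (if h : b + 1 < N then w N γ a (b + 1) * γ b else 0)
      + 2 * w N γ a b := by
  have e1 : (if h : a + 1 < N then γ a * w N γ (a + 1) b else 0) = γ a * w N γ (a + 1) b := by
    rcases lt_or_ge (a + 1) N with h | h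
    · rw [dif_pos h]
    · rw [dif_neg (by omega), hz a h, zero_mul]
  have e4 : (if h : b + 1 < N then w N γ a (b + 1) * γ b else 0) = w N γ a (b + 1) * γ b := by
    rcases lt_or_ge (b + 1) N with h | h
    · rw [dif_pos h]
    · rw [dif_neg (by omega), hz b h, mul_zero]
  have e2 : (if h : 1 ≤ a ∧ a - 1 < N then γ (a - 1) * w N γ (a - 1) b else 0)
      = (if 1 ≤ a then γ (a - 1) * w N γ (a - 1) b else 0) := by
    by_cases h : 1 ≤ a
    · rw [dif_pos ⟨h, by omega⟩, if_pos h]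
    · rw [dif_neg (fun hc => h hc.1), if_neg h]
  have e3 : (if h : 1 ≤ b ∧ b - 1 < N then w N γ a (b - 1) * γ (b - 1) else 0)
      = (if 1 ≤ b then w N γ a (b - 1) * γ (b - 1) else 0) := by
    by_cases h : 1 ≤ b
    · rw [dif_pos ⟨h, by omega⟩, if_pos h]
    · rw [dif_neg (fun hc => h hc.1), if_neg h]
  rw [e1, e2, e3, e4]
  rcases (by omega : b = a ∨ b = a + 1 ∨ a = b + 1 ∨ b = a + 2 ∨ a = b + 2
      ∨ (a + 3 ≤ b ∨ b + 3 ≤ a)) with hc | hc | hc | hc | hc | hc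
  · -- b = a
    subst hc
    rw [w_pred (x := b + 1) (y := b) rfl, w_succ (x := b) (y := b + 1) rfl,
      w_diag (x := b) (y := b) rfl]
    by_cases h1 : 1 ≤ b
    · rw [if_pos h1, if_pos h1, w_succ (x := b - 1) (y := b) (by omega),
        w_pred (x := b) (y := b - 1) (by omega)]
      have h2 : γ (b - 1) * γ (b - 1) = (b : ℂ) * ((N : ℂ) - (b : ℂ)) := by
        rw [hsq (b - 1) (by omega), Nat.cast_sub h1]
        push_cast
        ring
      linear_combination (norm := (push_cast; ring1)) 2 * h2 - 2 * hsq b (by omega)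
    · have hb0 : b = 0 := by omega
      subst hb0
      rw [if_neg h1, if_neg h1]
      linear_combination (norm := (push_cast; ring1)) (-2 : ℂ) * hsq 0 (by omega)
  · -- b = a + 1
    subst hc
    rw [w_diag (x := a + 1) (y := a + 1) rfl, w_succ (x := a) (y := a + 1) rfl,
      w_far (x := a) (y := a + 2) (by omega) (by omega) (by omega)]
    have h3 : (if 1 ≤ a then γ (a - 1) * w N γ (a - 1) (a + 1) else 0) = 0 := by
      by_cases h1 : 1 ≤ a
      · rw [if_pos h1, w_far (x := a - 1) (y := a + 1) (by omega) (by omega) (by omega), mul_zero]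
      · rw [if_neg h1]
    rw [h3, if_pos (show 1 ≤ a + 1 by omega), show a + 1 - 1 = a by omega,
      w_diag (x := a) (y := a) rfl]
    push_cast
    ring
  · -- a = b + 1
    subst hc
    rw [w_far (x := b + 1 + 1) (y := b) (by omega) (by omega) (by omega),
      if_pos (show 1 ≤ b + 1 by omega), show b + 1 - 1 = b by omega,
      w_diag (x := b) (y := b) rfl, w_diag (x := b + 1) (y := b + 1) rfl,
      w_pred (x := b + 1) (y := b) rfl]
    have h3 : (if 1 ≤ b then w N γ (b + 1) (b - 1) * γ (b - 1) else 0) = 0 := by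
      by_cases h1 : 1 ≤ b
      · rw [if_pos h1, w_far (x := b + 1) (y := b - 1) (by omega) (by omega) (by omega), zero_mul]
      · rw [if_neg h1]
    rw [h3]
    push_cast
    ring
  · -- b = a + 2
    subst hc
    rw [w_succ (x := a + 1) (y := a + 2) rfl,
      w_far (x := a) (y := a + 2 + 1) (by omega) (by omega) (by omega),
      w_far (x := a) (y := a + 2) (by omega) (by omega) (by omega),
      if_pos (show 1 ≤ a + 2 by omega), show a + 2 - 1 = a + 1 by omega,
      w_succ (x := a) (y := a + 1) rfl]
    have h3 : (if 1 ≤ a then γ (a - 1) * w N γ (a - 1) (a + 2) else 0) = 0 := by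
      by_cases h1 : 1 ≤ a
      · rw [if_pos h1, w_far (x := a - 1) (y := a + 2) (by omega) (by omega) (by omega), mul_zero]
      · rw [if_neg h1]
    rw [h3]
    ring
  · -- a = b + 2
    subst hc
    rw [w_far (x := b + 2 + 1) (y := b) (by omega) (by omega) (by omega),
      if_pos (show 1 ≤ b + 2 by omega), show b + 2 - 1 = b + 1 by omega,
      w_pred (x := b + 1) (y := b) rfl, w_pred (x := b + 2) (y := b + 1) rfl,
      w_far (x := b + 2) (y := b) (by omega) (by omega) (by omega)]
    have h3 : (if 1 ≤ b then w N γ (b + 2) (b - 1) * γ (b - 1) else 0) = 0 := by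
      by_cases h1 : 1 ≤ b
      · rw [if_pos h1, w_far (x := b + 2) (y := b - 1) (by omega) (by omega) (by omega), zero_mul]
      · rw [if_neg h1]
    rw [h3]
    ring
  · -- far apart
    rw [w_far (x := a + 1) (y := b) (by omega) (by omega) (by omega),
      w_far (x := a) (y := b + 1) (by omega) (by omega) (by omega),
      w_far (x := a) (y := b) (by omega) (by omega) (by omega)]
    have h2 : (if 1 ≤ a then γ (a - 1) * w N γ (a - 1) b else 0) = 0 := by
      by_cases h1 : 1 ≤ a
      · rw [if_pos h1, w_far (x := a - 1) (y := b) (by omega) (by omega) (by omega), mul_zero]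
      · rw [if_neg h1]
    have h3 : (if 1 ≤ b then w N γ a (b - 1) * γ (b - 1) else 0) = 0 := by
      by_cases h1 : 1 ≤ b
      · rw [if_pos h1, w_far (x := a) (y := b - 1) (by omega) (by omega) (by omega), zero_mul]
      · rw [if_neg h1]
    rw [h2, h3]
    ring
end Stmt5Aux

open Matrix

/-- In a Banach ℂ-algebra, `A * B = B * C` implies `exp A * B = B * exp C`. -/
theorem Stmt5Aux.semiconjExpAux {𝔸 : Type*} [NormedRing 𝔸] [NormedAlgebra ℂ 𝔸] [CompleteSpace 𝔸]
    {A B C : 𝔸} (h : A * B = B * C) :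
    NormedSpace.exp A * B = B * NormedSpace.exp C := by
  have hn : ∀ n : ℕ, A ^ n * B = B * C ^ n := by
    intro n
    induction n with
    | zero => simp
    | succ k ih => rw [pow_succ', mul_assoc, ih, ← mul_assoc, h, mul_assoc, ← pow_succ']
  have e1 : NormedSpace.exp A = ∑' n : ℕ, ((n.factorial : ℂ))⁻¹ • A ^ n :=
    congrFun (NormedSpace.exp_eq_tsum (𝕂 := ℂ)) _
  have e2 : NormedSpace.exp C = ∑' n : ℕ, ((n.factorial : ℂ))⁻¹ • C ^ n :=
    congrFun (NormedSpace.exp_eq_tsum (𝕂 := ℂ)) _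
  rw [e1, e2,
    ← (NormedSpace.expSeries_summable' (𝕂 := ℂ) A).tsum_mul_right B,
    ← (NormedSpace.expSeries_summable' (𝕂 := ℂ) C).tsum_mul_left B]
  exact tsum_congr fun n => by rw [smul_mul_assoc, mul_smul_comm, hn n]

/-- Matrix version of `semiconjExpAux`. -/
theorem Stmt5Aux.matrix_semiconj_exp {n : Type*} [Fintype n] [DecidableEq n]
    {A B C : Matrix n n ℂ} (h : A * B = B * C) :
    NormedSpace.exp A * B = B * NormedSpace.exp C := by
  letI : SeminormedRing (Matrix n n ℂ) := Matrix.linftyOpSemiNormedRing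
  letI : NormedRing (Matrix n n ℂ) := Matrix.linftyOpNormedRing
  letI : NormedAlgebra ℂ (Matrix n n ℂ) := Matrix.linftyOpNormedAlgebra
  exact Stmt5Aux.semiconjExpAux h

/-- exp of a scalar matrix. -/
theorem Stmt5Aux.exp_scalar {n : Type*} [Fintype n] [DecidableEq n] (c : ℂ) :
    NormedSpace.exp (c • (1 : Matrix n n ℂ)) = Complex.exp c • (1 : Matrix n n ℂ) := by
  letI : SeminormedRing (Matrix n n ℂ) := Matrix.linftyOpSemiNormedRing
  letI : NormedRing (Matrix n n ℂ) := Matrix.linftyOpNormedRing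
  letI : NormedAlgebra ℂ (Matrix n n ℂ) := Matrix.linftyOpNormedAlgebra
  erw [← Algebra.algebraMap_eq_smul_one, ← NormedSpace.algebraMap_exp_comm,
    Algebra.algebraMap_eq_smul_one, Complex.exp_eq_exp_ℂ]

theorem Stmt5Aux.sum_pick {N : ℕ} (a : ℕ) (f : Fin N → ℂ) :
    (∑ k : Fin N, if a = (k : ℕ) then f k else 0) = if h : a < N then f ⟨a, h⟩ else 0 := by
  by_cases h : a < N
  · rw [dif_pos h, Finset.sum_eq_single (⟨a, h⟩ : Fin N)]
    · simp
    · rintro b - hb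
      exact if_neg fun hc => hb (Fin.ext hc.symm)
    · simp
  · rw [dif_neg h]
    refine Finset.sum_eq_zero fun k _ => if_neg fun hc => h ?_
    rw [hc]; exact k.isLt

theorem Stmt5Aux.sum_pick' {N : ℕ} (a : ℕ) (f : Fin N → ℂ) :
    (∑ k : Fin N, if (k : ℕ) + 1 = a then f k else 0)
      = if h : 1 ≤ a ∧ a - 1 < N then f ⟨a - 1, h.2⟩ else 0 := by
  by_cases h : 1 ≤ a ∧ a - 1 < N
  · rw [dif_pos h, Finset.sum_eq_single (⟨a - 1, h.2⟩ : Fin N)]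
    · exact if_pos (by show a - 1 + 1 = a; omega)
    · rintro b - hb
      refine if_neg fun hc => hb (Fin.ext ?_)
      show (b : ℕ) = a - 1
      omega
    · simp
  · rw [dif_neg h]
    refine Finset.sum_eq_zero fun k _ => if_neg fun hc => h ⟨by omega, by have := k.isLt; omega⟩

namespace Stmt5Aux

/-- The ladder matrix. -/
noncomputable def Wmat (N : ℕ) (γ : ℕ → ℂ) : Matrix (Fin N) (Fin N) ℂ :=
  Matrix.of fun i j => w N γ (i : ℕ) (j : ℕ)

/-- The tridiagonal Hamiltonian with couplings `γ`. -/
noncomputable def Hmat (N : ℕ) (γ : ℕ → ℂ) : Matrix (Fin N) (Fin N) ℂ :=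
  Matrix.of fun i j =>
    if (i : ℕ) + 1 = (j : ℕ) then γ (i : ℕ)
    else if (j : ℕ) + 1 = (i : ℕ) then γ (j : ℕ) else 0

theorem comm1 (N : ℕ) (γ : ℕ → ℂ)
    (hsq : ∀ n, n + 1 ≤ N → γ n * γ n = ((n : ℂ) + 1) * ((N : ℂ) - ((n : ℂ) + 1)))
    (hz : ∀ n, N ≤ n + 1 → γ n = 0) :
    Hmat N γ * Wmat N γ = Wmat N γ * Hmat N γ + (2 : ℂ) • Wmat N γ := by
  ext i j
  simp only [Matrix.add_apply, Matrix.smul_apply, Matrix.mul_apply, Hmat, Wmat,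
    Matrix.of_apply, smul_eq_mul]
  have hH : ∀ x y : ℕ, (if x + 1 = y then γ x else if y + 1 = x then γ y else 0)
      = (if x + 1 = y then γ x else 0) + (if y + 1 = x then γ y else 0) := by
    intro x y
    split_ifs <;> first | ring1 | (exfalso; omega)
  simp only [hH, add_mul, mul_add, ite_mul, mul_ite, zero_mul, mul_zero,
    Finset.sum_add_distrib]
  rw [sum_pick ((i : ℕ) + 1) (fun k => γ (i : ℕ) * w N γ (k : ℕ) (j : ℕ)),
    sum_pick' (i : ℕ) (fun k => γ (k : ℕ) * w N γ (k : ℕ) (j : ℕ)),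
    sum_pick' (j : ℕ) (fun k => w N γ (i : ℕ) (k : ℕ) * γ (k : ℕ)),
    sum_pick ((j : ℕ) + 1) (fun k => w N γ (i : ℕ) (k : ℕ) * γ (j : ℕ))]
  exact KE N γ hsq hz (i : ℕ) (j : ℕ) i.isLt j.isLt

end Stmt5Aux

namespace Stmt5Aux

theorem Hmat_symm (N : ℕ) (γ : ℕ → ℂ) : (Hmat N γ)ᵀ = Hmat N γ := by
  ext i j
  simp only [Matrix.transpose_apply, Hmat, Matrix.of_apply]
  split_ifs <;> first | rfl | omega

theorem comm2 (N : ℕ) (γ : ℕ → ℂ)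
    (hsq : ∀ n, n + 1 ≤ N → γ n * γ n = ((n : ℂ) + 1) * ((N : ℂ) - ((n : ℂ) + 1)))
    (hz : ∀ n, N ≤ n + 1 → γ n = 0) :
    Hmat N γ * (Wmat N γ)ᵀ = (Wmat N γ)ᵀ * Hmat N γ - (2 : ℂ) • (Wmat N γ)ᵀ := by
  have h := congrArg Matrix.transpose (comm1 N γ hsq hz)
  rw [Matrix.transpose_mul, Matrix.transpose_add, Matrix.transpose_mul, Matrix.transpose_smul,
    Hmat_symm] at h
  rw [h]
  abel

theorem WT_diag (N : ℕ) (γ : ℕ → ℂ) :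
    Wmat N γ + (Wmat N γ)ᵀ
      = Matrix.diagonal (fun i : Fin N => (2 : ℂ) * (2 * ((i : ℕ) : ℂ) - ((N : ℂ) - 1))) := by
  ext i j
  by_cases hij : i = j
  · subst hij
    simp only [Matrix.add_apply, Matrix.transpose_apply, Wmat, Matrix.of_apply,
      Matrix.diagonal_apply_eq]
    rw [w_diag rfl]
    ring
  · rw [Matrix.diagonal_apply_ne _ hij]
    simp only [Matrix.add_apply, Matrix.transpose_apply, Wmat, Matrix.of_apply]
    have hij' : (i : ℕ) ≠ (j : ℕ) := fun h => hij (Fin.ext h)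
    by_cases h1 : (i : ℕ) + 1 = (j : ℕ)
    · rw [w_succ h1, w_pred h1]; ring
    · by_cases h2 : (j : ℕ) + 1 = (i : ℕ)
      · rw [w_pred h2, w_succ h2]; ring
      · rw [w_far h1 h2 hij', w_far h2 h1 (Ne.symm hij')]; ring

end Stmt5Aux

open Stmt5Aux in
/-- claim established inside the proof of the paper's Lemma 3.
For the standard perfect state transfer chain of even length `N` (zero diagonal,
couplings `J_n = √(n(N-n))`), the matrix `R = exp(i (π/4) h₁) · D̃ · exp(-i (π/4) h₁)`
vanishes at every entry `(n, m)` with `n ≡ m (mod 2)`, where `D̃` is the diagonal matrix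
whose first `N/2` entries are `-1` and last `N/2` entries are `+1`. -/
theorem stmt5 (N : ℕ) (hN : 2 ≤ N) (hNeven : Even N)
    (h₁ : Matrix (Fin N) (Fin N) ℂ)
    (hh₁ : h₁ = Matrix.of fun i j : Fin N =>
      if (i : ℕ) + 1 = (j : ℕ) then
        ((Real.sqrt ((((i : ℕ) + 1) * (N - ((i : ℕ) + 1)) : ℕ)) : ℝ) : ℂ)
      else if (j : ℕ) + 1 = (i : ℕ) then
        ((Real.sqrt ((((j : ℕ) + 1) * (N - ((j : ℕ) + 1)) : ℕ)) : ℝ) : ℂ)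
      else 0)
    (Dt : Matrix (Fin N) (Fin N) ℂ)
    (hDt : Dt = Matrix.diagonal fun n : Fin N => if (n : ℕ) < N / 2 then (-1 : ℂ) else 1)
    (R : Matrix (Fin N) (Fin N) ℂ)
    (hR : R = NormedSpace.exp ((Complex.I * ((Real.pi : ℂ) / 4)) • h₁) * Dt *
      NormedSpace.exp ((-Complex.I * ((Real.pi : ℂ) / 4)) • h₁)) :
    ∀ n m : Fin N, (n : ℕ) % 2 = (m : ℕ) % 2 → R n m = 0 := by
  -- the couplings
  set γ : ℕ → ℂ := fun n => ((Real.sqrt (((n + 1) * (N - (n + 1)) : ℕ)) : ℝ) : ℂ) with hγ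
  have hsq : ∀ n, n + 1 ≤ N → γ n * γ n = ((n : ℂ) + 1) * ((N : ℂ) - ((n : ℂ) + 1)) := by
    intro n hn
    rw [hγ]
    simp only []
    rw [← Complex.ofReal_mul, Real.mul_self_sqrt (Nat.cast_nonneg _)]
    push_cast [Nat.cast_sub hn]
    ring
  have hz : ∀ n, N ≤ n + 1 → γ n = 0 := by
    intro n hn
    rw [hγ]
    simp only [Nat.sub_eq_zero_of_le hn, mul_zero, Nat.cast_zero, Real.sqrt_zero,
      Complex.ofReal_zero]
  have hH : h₁ = Hmat N γ := by rw [hh₁]; rfl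
  set z : ℂ := Complex.I * ((Real.pi : ℂ) / 4) with hzdef
  set H : Matrix (Fin N) (Fin N) ℂ := Hmat N γ with hHdef
  set U : Matrix (Fin N) (Fin N) ℂ := NormedSpace.exp (z • H) with hU
  set U' : Matrix (Fin N) (Fin N) ℂ := NormedSpace.exp ((-z) • H) with hU'
  set V : Matrix (Fin N) (Fin N) ℂ := NormedSpace.exp (((2 : ℂ) * z) • H) with hV
  have hRU : R = U * Dt * U' := by
    rw [hR, hH]
    congr 2
    congr 1
    rw [hzdef]
    ring
  -- basic exp facts
  have hcm : Commute (z • H) ((-z) • H) := ((Commute.refl H).smul_left z).smul_right (-z)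
  have hUU' : U * U' = 1 := by
    rw [hU, hU', ← Matrix.exp_add_of_commute _ _ hcm,
      show z • H + (-z) • H = (0 : Matrix (Fin N) (Fin N) ℂ) by rw [← add_smul]; simp,
      NormedSpace.exp_zero]
  have hU'U : U' * U = 1 := by
    rw [hU, hU', ← Matrix.exp_add_of_commute _ _ hcm.symm,
      show (-z) • H + z • H = (0 : Matrix (Fin N) (Fin N) ℂ) by rw [← add_smul]; simp,
      NormedSpace.exp_zero]
  have hVUU : V = U * U := by
    rw [hV, hU, show ((2 : ℂ) * z) • H = z • H + z • H from by rw [← add_smul, two_mul],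
      Matrix.exp_add_of_commute _ _ (Commute.refl (z • H))]
  -- the ladder matrix
  set W : Matrix (Fin N) (Fin N) ℂ := Wmat N γ with hW
  have hc1 : H * W = W * H + (2 : ℂ) • W := by
    rw [hHdef, hW]; exact comm1 N γ hsq hz
  have hc2 : H * Wᵀ = Wᵀ * H - (2 : ℂ) • Wᵀ := by
    rw [hHdef, hW]; exact comm2 N γ hsq hz
  have hsemi1 : (((2 : ℂ) * z) • H) * W
      = W * ((((2 : ℂ) * z) • H) + ((2 : ℂ) * z * 2) • (1 : Matrix (Fin N) (Fin N) ℂ)) := by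
    simp only [smul_mul_assoc, hc1, smul_add, smul_smul, mul_add, mul_smul_comm, mul_one]
  have hsemi2 : (((2 : ℂ) * z) • H) * Wᵀ
      = Wᵀ * ((((2 : ℂ) * z) • H) + (-((2 : ℂ) * z * 2)) • (1 : Matrix (Fin N) (Fin N) ℂ)) := by
    simp only [smul_mul_assoc, hc2, sub_eq_add_neg, smul_add, smul_neg, smul_smul, mul_add,
      mul_neg, mul_smul_comm, mul_one, neg_smul]
  have hexpc : NormedSpace.exp (((2 : ℂ) * z * 2) • (1 : Matrix (Fin N) (Fin N) ℂ))
      = (-1 : ℂ) • (1 : Matrix (Fin N) (Fin N) ℂ) := by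
    rw [exp_scalar, show (2 : ℂ) * z * 2 = (Real.pi : ℂ) * Complex.I from by rw [hzdef]; ring,
      Complex.exp_pi_mul_I]
  have hexpc2 : NormedSpace.exp ((-((2 : ℂ) * z * 2)) • (1 : Matrix (Fin N) (Fin N) ℂ))
      = (-1 : ℂ) • (1 : Matrix (Fin N) (Fin N) ℂ) := by
    rw [exp_scalar, show -((2 : ℂ) * z * 2) = -((Real.pi : ℂ) * Complex.I) from by
      rw [hzdef]; ring, Complex.exp_neg, Complex.exp_pi_mul_I]
    norm_num
  have hVW : V * W = -(W * V) := by
    have h1 := matrix_semiconj_exp hsemi1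
    rw [Matrix.exp_add_of_commute _ _ ((Commute.one_right _).smul_right _), hexpc,
      mul_smul_comm, mul_one, neg_one_smul, mul_neg] at h1
    rw [hV]
    exact h1
  have hVWT : V * Wᵀ = -(Wᵀ * V) := by
    have h1 := matrix_semiconj_exp hsemi2
    rw [Matrix.exp_add_of_commute _ _ ((Commute.one_right _).smul_right _), hexpc2,
      mul_smul_comm, mul_one, neg_one_smul, mul_neg] at h1
    rw [hV]
    exact h1
  set dv : Fin N → ℂ := fun i => (2 : ℂ) * (2 * ((i : ℕ) : ℂ) - ((N : ℂ) - 1)) with hdv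
  have hWWT : W + Wᵀ = Matrix.diagonal dv := by rw [hW]; exact WT_diag N γ
  have hVD : V * Matrix.diagonal dv = -(Matrix.diagonal dv * V) := by
    rw [← hWWT, mul_add, add_mul, hVW, hVWT, neg_add]
  -- V is supported on the antidiagonal
  have hVsupp : ∀ i j : Fin N, (i : ℕ) + (j : ℕ) ≠ N - 1 → V i j = 0 := by
    intro i j hne
    have h := congrArg (fun M : Matrix (Fin N) (Fin N) ℂ => M i j) hVD
    simp only [Matrix.mul_diagonal, Matrix.diagonal_mul, Matrix.neg_apply] at h
    have hsum : dv i + dv j ≠ 0 := by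
      intro h0
      apply hne
      rw [hdv] at h0
      simp only [] at h0
      have h2 : (((i : ℕ) + (j : ℕ) : ℕ) : ℂ) = ((N - 1 : ℕ) : ℂ) := by
        push_cast [Nat.cast_sub (show 1 ≤ N by omega)]
        linear_combination h0 / 4
      exact_mod_cast h2
    have hmul : V i j * (dv i + dv j) = 0 := by linear_combination h
    rcases mul_eq_zero.mp hmul with h' | h'
    · exact h'
    · exact absurd h' hsum
  -- V anticommutes with Dt
  have hVDt : V * Dt = -(Dt * V) := by
    obtain ⟨K, hK⟩ := hNeven
    rw [hDt]
    ext i j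
    have hiL := i.isLt
    have hjL := j.isLt
    simp only [Matrix.mul_diagonal, Matrix.diagonal_mul, Matrix.neg_apply]
    by_cases hij : (i : ℕ) + (j : ℕ) = N - 1
    · by_cases hi : (i : ℕ) < N / 2
      · rw [if_pos hi, if_neg (show ¬((j : ℕ) < N / 2) by omega)]
        ring
      · rw [if_neg hi, if_pos (show (j : ℕ) < N / 2 by omega)]
        ring
    · rw [hVsupp i j hij]
      ring
  -- the parity matrix
  set p : Fin N → ℂ := fun i => (-1 : ℂ) ^ (i : ℕ) with hp
  set P : Matrix (Fin N) (Fin N) ℂ := Matrix.diagonal p with hPdef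
  have hanti : H * P = -(P * H) := by
    ext i j
    rw [hPdef]
    simp only [Matrix.mul_diagonal, Matrix.diagonal_mul, Matrix.neg_apply]
    rw [hHdef]
    simp only [Hmat, Matrix.of_apply, hp]
    by_cases h1 : (i : ℕ) + 1 = (j : ℕ)
    · rw [if_pos h1, ← h1, pow_succ]
      ring
    · rw [if_neg h1]
      by_cases h2 : (j : ℕ) + 1 = (i : ℕ)
      · rw [if_pos h2, ← h2, pow_succ]
        ring
      · rw [if_neg h2]
        ring
  have hPH : ((-z) • H) * P = P * (z • H) := by
    rw [smul_mul_assoc, mul_smul_comm, hanti, smul_neg, neg_smul, neg_neg]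
  have hPH' : (z • H) * P = P * ((-z) • H) := by
    rw [smul_mul_assoc, mul_smul_comm, hanti, smul_neg, neg_smul]
  have hU'P : U' * P = P * U := by
    have h1 := matrix_semiconj_exp hPH
    rw [← hU, ← hU'] at h1
    exact h1
  have hUP : U * P = P * U' := by
    have h1 := matrix_semiconj_exp hPH'
    rw [← hU, ← hU'] at h1
    exact h1
  have hPP : P * P = 1 := by
    rw [hPdef, Matrix.diagonal_mul_diagonal, ← Matrix.diagonal_one]
    refine congrArg Matrix.diagonal (funext fun i => ?_)
    simp only [hp]
    rw [← pow_add]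
    exact Even.neg_one_pow ⟨(i : ℕ), rfl⟩
  have hPDt : P * Dt = Dt * P := by
    rw [hPdef, hDt, Matrix.diagonal_mul_diagonal, Matrix.diagonal_mul_diagonal]
    exact congrArg Matrix.diagonal (funext fun i => mul_comm _ _)
  -- the key anticommutation for R
  have key : U * Dt * U' = -(U' * Dt * U) := by
    have h1 : U' * (V * Dt) * U' = U * Dt * U' := by
      rw [hVUU]
      simp only [← mul_assoc]
      rw [hU'U, one_mul]
    have h2 : U' * (V * Dt) * U' = -(U' * Dt * U) := by
      rw [hVDt, hVUU]
      simp only [mul_neg, neg_mul, ← mul_assoc]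
      rw [mul_assoc (U' * Dt * U) U U', hUU', mul_one]
    rw [← h1, h2]
  have hPRP : P * R * P = -R := by
    rw [hRU]
    simp only [← mul_assoc]
    rw [← hU'P, mul_assoc U' P Dt, hPDt, ← mul_assoc U' Dt P,
      mul_assoc (U' * Dt) P U', ← hUP, ← mul_assoc (U' * Dt) U P,
      mul_assoc (U' * Dt * U) P P, hPP, mul_one, key, neg_neg]
  -- extract the entrywise statement
  intro n m hpar
  have hnm := congrArg (fun M : Matrix (Fin N) (Fin N) ℂ => M n m) hPRP
  simp only [Matrix.neg_apply] at hnm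
  have hL : (P * R * P) n m = p n * R n m * p m := by
    rw [hPdef, Matrix.mul_diagonal, Matrix.diagonal_mul]
  have heven : Even ((n : ℕ) + (m : ℕ)) := by
    rw [Nat.even_add, Nat.even_iff, Nat.even_iff, hpar]
  have hpp : p n * p m = 1 := by
    rw [hp]
    simp only []
    rw [← pow_add]
    exact Even.neg_one_pow heven
  have hfin : R n m = -(R n m) := by
    calc R n m = (p n * p m) * R n m := by rw [hpp, one_mul]
    _ = p n * R n m * p m := by ring
    _ = -(R n m) := by rw [← hL]; exact hnm
  linear_combination hfin / 2
end

section
/- Let M ≥ 1 and let H₁, G₂ be matrices over GF(2) with M columns. Assume: (a) every nonzero x ∈ GF(2)^M of Hamming weight at most 4 satisfies H₁·x ≠ 0 (i.e. any 4 columns of H₁ are linearly independent, distance 5); (b) every nonzero z ∈ GF(2)^M of Hamming weight at most 2 satisfies G₂·z ≠ 0 (i.e. any 2 columns of G₂ are linearly independent, distance 3). For n ∈ {1,…,M} define the fermion error vectors in GF(2)^M × GF(2)^M: c_n = (χ_{{1,…,n−1}}, e_n) and c′_n = (χ_{{1,…,n}}, e_n), where e_n is the n-th standard basis vector and χ_S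 the indicator vector of a set S. Let 𝓔 ⊆ GF(2)^M × GF(2)^M be the set of all sums of at most two vectors from {c_n, c′_n : 1 ≤ n ≤ M} (including the empty sum 0). Then the syndrome map (z, x) ↦ (H₁·x, G₂·z) is injective on 𝓔. -/
open Matrix Finset


lemma zmod2_add_eq_zero {a b : ZMod 2} (h : a + b = 0) : a = b := by revert h; revert a b; decide

lemma list_sum_apply' {ι : Type*} (l : List (ι → ZMod 2)) (i : ι) :
    l.sum i = (l.map fun f => f i).sum := by
  induction l with
  | nil => rfl
  | cons a t ih => simp [ih]

lemma fst_list_sum {A B : Type*} [AddMonoid A] [AddMonoid B] (l : List (A × B)) :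
    l.sum.1 = (l.map Prod.fst).sum := by
  induction l with
  | nil => rfl
  | cons a t ih => simp [ih]

lemma snd_list_sum {A B : Type*} [AddMonoid A] [AddMonoid B] (l : List (A × B)) :
    l.sum.2 = (l.map Prod.snd).sum := by
  induction l with
  | nil => rfl
  | cons a t ih => simp [ih]

lemma sum_map_add {α : Type*} (l : List α) (f g : α → ZMod 2) :
    (l.map fun a => f a + g a).sum = (l.map f).sum + (l.map g).sum := by
  induction l with
  | nil => simp
  | cons a t ih => simp [ih]; ring

lemma sum_map_count {α : Type*} [DecidableEq α] (l : List α) (a : α) :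
    (l.map fun b => if b = a then (1 : ZMod 2) else 0).sum = (l.count a : ZMod 2) := by
  induction l with
  | nil => simp
  | cons b t ih =>
    by_cases h : b = a <;> simp [List.count_cons, h, ih] <;> ring

lemma sum_map_finset_sum {α β : Type*} (l : List α) (s : Finset β) (f : α → β → ZMod 2) :
    (l.map fun a => ∑ j ∈ s, f a j).sum = ∑ j ∈ s, (l.map fun a => f a j).sum := by
  induction l with
  | nil => simp
  | cons a t ih => simp [ih, Finset.sum_add_distrib]

/-- paper's Lemma 1. Over `GF(2)`, if `H₁` has any 4 columns linearly
independent (distance 5) and `G₂` has any 2 columns linearly independent (distance 3),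
then the syndrome map `(z, x) ↦ (H₁·x, G₂·z)` is injective on the set `𝓔` of sums of at
most two of the Majorana fermion error vectors
`c_n = (χ_{{1,…,n-1}}, e_n)` and `c′_n = (χ_{{1,…,n}}, e_n)`. -/
theorem stmt14 (M : ℕ) (hM : 1 ≤ M) (r₁ r₂ : ℕ)
    (H₁ : Matrix (Fin r₁) (Fin M) (ZMod 2)) (G₂ : Matrix (Fin r₂) (Fin M) (ZMod 2))
    (hH₁ : ∀ x : Fin M → ZMod 2, x ≠ 0 →
      (Finset.univ.filter fun i => x i ≠ 0).card ≤ 4 → H₁.mulVec x ≠ 0)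
    (hG₂ : ∀ z : Fin M → ZMod 2, z ≠ 0 →
      (Finset.univ.filter fun i => z i ≠ 0).card ≤ 2 → G₂.mulVec z ≠ 0)
    (c c' : Fin M → (Fin M → ZMod 2) × (Fin M → ZMod 2))
    (hc : ∀ n : Fin M, c n =
      ((fun i : Fin M => if (i : ℕ) < (n : ℕ) then (1 : ZMod 2) else 0),
        fun i : Fin M => if i = n then (1 : ZMod 2) else 0))
    (hc' : ∀ n : Fin M, c' n =
      ((fun i : Fin M => if (i : ℕ) ≤ (n : ℕ) then (1 : ZMod 2) else 0),
        fun i : Fin M => if i = n then (1 : ZMod 2) else 0))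
    (gens E : Set ((Fin M → ZMod 2) × (Fin M → ZMod 2)))
    (hgens : gens = Set.range c ∪ Set.range c')
    (hE : E = {0} ∪ gens ∪ {p | ∃ a ∈ gens, ∃ b ∈ gens, p = a + b}) :
    ∀ p ∈ E, ∀ q ∈ E,
      (H₁.mulVec p.2, G₂.mulVec p.1) = (H₁.mulVec q.2, G₂.mulVec q.1) → p = q := by
  classical
  set g : Bool × Fin M → (Fin M → ZMod 2) × (Fin M → ZMod 2) :=
    fun tn => if tn.1 then c' tn.2 else c tn.2 with hg
  -- every element of gens is a g-value
  have hgen_rep : ∀ a ∈ gens, ∃ tn : Bool × Fin M, g tn = a := by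
    intro a ha
    rw [hgens] at ha
    rcases ha with ⟨n, rfl⟩ | ⟨n, rfl⟩
    · exact ⟨(false, n), by simp [hg]⟩
    · exact ⟨(true, n), by simp [hg]⟩
  have hrep : ∀ r ∈ E, ∃ L : List (Bool × Fin M), L.length ≤ 2 ∧ r = (L.map g).sum := by
    intro r hr
    rw [hE] at hr
    rcases hr with (h0 | hgen) | ⟨a, ha, b, hb, rfl⟩
    · exact ⟨[], by simp, by simpa using h0⟩
    · obtain ⟨tn, htn⟩ := hgen_rep r hgen
      exact ⟨[tn], by simp, by simp [htn]⟩
    · obtain ⟨ta, hta⟩ := hgen_rep a ha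
      obtain ⟨tb, htb⟩ := hgen_rep b hb
      exact ⟨[ta, tb], by simp, by simp [hta, htb]⟩
  -- values of g, second component
  have hg2 : ∀ tn : Bool × Fin M, ∀ i, (g tn).2 i = if tn.2 = i then (1 : ZMod 2) else 0 := by
    rintro ⟨t, n⟩ i
    cases t
    · rw [show g (false, n) = c n from rfl, hc]
      simp [eq_comm]
    · rw [show g (true, n) = c' n from rfl, hc']
      simp [eq_comm]
  -- values of g, first component
  have hg1 : ∀ tn : Bool × Fin M, ∀ i,
      (g tn).1 i = (if (i : ℕ) < (tn.2 : ℕ) then (1 : ZMod 2) else 0)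
        + (if tn = (true, i) then (1 : ZMod 2) else 0) := by
    rintro ⟨t, n⟩ i
    cases t
    · rw [show g (false, n) = c n from rfl, hc]
      simp [Prod.ext_iff]
    · rw [show g (true, n) = c' n from rfl, hc']
      simp only
      rcases lt_trichotomy (i : ℕ) (n : ℕ) with h | h | h
      · have hne : ¬ ((true, n) = (true, i)) := by
          simp only [Prod.mk.injEq, true_and]
          intro he; subst he; exact lt_irrefl _ h
        simp [h, le_of_lt h, hne]
      · have he : n = i := Fin.ext h.symm
        subst he
        simp
      · have hne : ¬ ((true, n) = (true, i)) := by
          simp only [Prod.mk.injEq, true_and]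
          intro he; subst he; exact lt_irrefl _ h
        simp [not_le.mpr h, not_lt.mpr (le_of_lt h), hne]
  -- the key lemma
  have key : ∀ L : List (Bool × Fin M), L.length ≤ 4 →
      H₁.mulVec ((L.map g).sum).2 = 0 → G₂.mulVec ((L.map g).sum).1 = 0 →
      (L.map g).sum = 0 := by
    intro L hL hx hz
    set s := (L.map g).sum with hs
    have hx2 : ∀ i, s.2 i = ((L.map Prod.snd).count i : ZMod 2) := by
      intro i
      rw [hs, snd_list_sum, List.map_map, list_sum_apply', List.map_map]
      have : ((fun f : Fin M → ZMod 2 => f i) ∘ Prod.snd ∘ g)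
          = fun tn : Bool × Fin M => if tn.2 = i then (1 : ZMod 2) else 0 := by
        funext tn; exact hg2 tn i
      rw [this, ← sum_map_count (L.map Prod.snd) i, List.map_map]
      rfl
    -- support of s.2 is small
    have hxsupp : (univ.filter fun i => s.2 i ≠ 0) ⊆ (L.map Prod.snd).toFinset := by
      intro i hi
      simp only [mem_filter, mem_univ, true_and] at hi
      rw [List.mem_toFinset]
      by_contra hmem
      exact hi (by rw [hx2 i, List.count_eq_zero.mpr hmem]; simp)
    have hxcard : (univ.filter fun i => s.2 i ≠ 0).card ≤ 4 := by
      calc (univ.filter fun i => s.2 i ≠ 0).card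
          ≤ (L.map Prod.snd).toFinset.card := Finset.card_le_card hxsupp
        _ ≤ (L.map Prod.snd).length := List.toFinset_card_le _
        _ = L.length := List.length_map _
        _ ≤ 4 := hL
    have hx0 : s.2 = 0 := by
      by_contra h
      exact hH₁ s.2 h hxcard hx
    -- counts are even
    have heven : ∀ i, 2 ∣ (L.map Prod.snd).count i := by
      intro i
      have := hx2 i
      rw [hx0] at this
      exact (ZMod.natCast_eq_zero_iff _ 2).mp this.symm
    -- first component formula
    have hz1 : ∀ i, s.1 i = (L.map fun tn : Bool × Fin M =>
        if tn = (true, i) then (1 : ZMod 2) else 0).sum := by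
      intro i
      rw [hs, fst_list_sum, List.map_map, list_sum_apply', List.map_map]
      have h1 : ((fun f : Fin M → ZMod 2 => f i) ∘ Prod.fst ∘ g)
          = fun tn : Bool × Fin M => (if (i : ℕ) < (tn.2 : ℕ) then (1 : ZMod 2) else 0)
            + (if tn = (true, i) then (1 : ZMod 2) else 0) := by
        funext tn; exact hg1 tn i
      rw [h1, sum_map_add]
      have h2 : (L.map fun tn : Bool × Fin M =>
          if (i : ℕ) < (tn.2 : ℕ) then (1 : ZMod 2) else 0).sum = 0 := by
        have h3 : (fun tn : Bool × Fin M => if (i : ℕ) < (tn.2 : ℕ) then (1 : ZMod 2) else 0)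
            = fun tn : Bool × Fin M =>
              ∑ j ∈ univ.filter (fun j : Fin M => (i : ℕ) < (j : ℕ)),
                if tn.2 = j then (1 : ZMod 2) else 0 := by
          funext tn
          rw [Finset.sum_ite_eq (univ.filter fun j : Fin M => (i : ℕ) < (j : ℕ)) tn.2
            (fun _ => (1 : ZMod 2))]
          simp
        rw [h3, sum_map_finset_sum]
        refine Finset.sum_eq_zero fun j _ => ?_
        have := hx2 j
        rw [hx0] at this
        have h4 : (L.map fun tn : Bool × Fin M => if tn.2 = j then (1 : ZMod 2) else 0).sum
            = s.2 j := by
          rw [hx2 j, ← sum_map_count (L.map Prod.snd) j, List.map_map]; rfl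
        rw [h4, hx0]; rfl
      rw [h2, zero_add]
    -- support of s.1 small
    have hzsupp : (univ.filter fun i => s.1 i ≠ 0) ⊆ (L.map Prod.snd).toFinset := by
      intro i hi
      simp only [mem_filter, mem_univ, true_and] at hi
      rw [List.mem_toFinset]
      by_contra hmem
      apply hi
      rw [hz1 i]
      apply List.sum_eq_zero
      intro x hx'
      rw [List.mem_map] at hx'
      obtain ⟨tn, htn, rfl⟩ := hx'
      have hne : tn ≠ (true, i) := by
        intro he; subst he
        exact hmem (List.mem_map.mpr ⟨(true, i), htn, rfl⟩)
      simp [hne]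
    have hcard2 : (L.map Prod.snd).toFinset.card ≤ 2 := by
      by_contra h
      push_neg at h
      have h5 : ∀ i ∈ (L.map Prod.snd).toFinset, 2 ≤ (L.map Prod.snd).count i := by
        intro i hi
        have hpos : 0 < (L.map Prod.snd).count i :=
          List.count_pos_iff.mpr (List.mem_toFinset.mp hi)
        obtain ⟨k, hk⟩ := heven i
        omega
      have h6 : 2 * (L.map Prod.snd).toFinset.card
          ≤ ∑ i ∈ (L.map Prod.snd).toFinset, (L.map Prod.snd).count i := by
        rw [two_mul]
        calc (L.map Prod.snd).toFinset.card + (L.map Prod.snd).toFinset.card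
            = ∑ _i ∈ (L.map Prod.snd).toFinset, 2 := by
              rw [Finset.sum_const, smul_eq_mul]; ring
          _ ≤ _ := Finset.sum_le_sum h5
      have h7 : ∑ i ∈ (L.map Prod.snd).toFinset, (L.map Prod.snd).count i
          = (L.map Prod.snd).length := by
        have := Multiset.toFinset_sum_count_eq (↑(L.map Prod.snd) : Multiset (Fin M))
        simpa [Multiset.coe_count] using this
      have h8 : (L.map Prod.snd).length = L.length := List.length_map _
      omega
    have hz0 : s.1 = 0 := by
      by_contra h
      exact hG₂ s.1 h (le_trans (Finset.card_le_card hzsupp) hcard2) hz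
    exact Prod.ext hz0 hx0
  -- main argument
  intro p hp q hq hsyn
  obtain ⟨Lp, hLp, hpe⟩ := hrep p hp
  obtain ⟨Lq, hLq, hqe⟩ := hrep q hq
  rw [Prod.mk.injEq] at hsyn
  obtain ⟨h1, h2⟩ := hsyn
  have hsum : ((Lp ++ Lq).map g).sum = p + q := by
    rw [List.map_append, List.sum_append, hpe, hqe]
  have hxs : H₁.mulVec ((Lp ++ Lq).map g).sum.2 = 0 := by
    rw [hsum]
    have : (p + q).2 = p.2 + q.2 := rfl
    rw [this, Matrix.mulVec_add, h1]
    funext i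
    simp only [Pi.add_apply, Pi.zero_apply]
    have hself : ∀ a : ZMod 2, a + a = 0 := by decide
    exact hself _
  have hzs : G₂.mulVec ((Lp ++ Lq).map g).sum.1 = 0 := by
    rw [hsum]
    have : (p + q).1 = p.1 + q.1 := rfl
    rw [this, Matrix.mulVec_add, h2]
    funext i
    simp only [Pi.add_apply, Pi.zero_apply]
    have : ∀ a : ZMod 2, a + a = 0 := by decide
    exact this _
  have hlen : (Lp ++ Lq).length ≤ 4 := by
    rw [List.length_append]; omega
  have h0 := key (Lp ++ Lq) hlen hxs hzs
  rw [hsum] at h0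
  have hfst : p.1 = q.1 := by
    funext i
    exact zmod2_add_eq_zero (congrFun (congrArg Prod.fst h0) i)
  have hsnd : p.2 = q.2 := by
    funext i
    exact zmod2_add_eq_zero (congrFun (congrArg Prod.snd h0) i)
  exact Prod.ext hfst hsnd
end
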